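/- Let A be an NFA over Σ_n without ε-transitions and with state set Q, and let k = (|Q|+1)². Then there exist finitely many linear sets L_1,…,L_m ⊆ ℤ^n (each given with a representation by a base vector and a finite set of periods) such that L(A) ⊆ ⋃_{i=1}^m K^k(L_i) and Δ(L(A)) = ⋃_{i=1}^m Δ(K^k(L_i)) = ⋃_{i=1}^m L_i, where Δ is applied elementwise to languages. -/

import Mathlib

set_option linter.unusedVariables false

/-! ### Alphabet, effects, Dyck languages -/

abbrev Sig (n : ℕ) := Fin n × Bool

def letterEff {n : ℕ} (a : Sig n) : Fin n → ℤ :=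
  fun j => if j = a.1 then (if a.2 then 1 else -1) else 0

def wordEff {n : ℕ} (w : List (Sig n)) : Fin n → ℤ :=
  (w.map letterEff).sum

/-- The Dyck language `D_n`. -/
def Dyck (n : ℕ) : Language (Sig n) :=
  {w | wordEff w = 0 ∧ ∀ u, u <+: w → ∀ j, 0 ≤ wordEff u j}

/-- The coverability Dyck language `D_n^↑`. -/
def CovDyck (n : ℕ) : Language (Sig n) :=
  {w | ∀ u, u <+: w → ∀ j, 0 ≤ wordEff u j}

/-- The `ℤ`-Dyck language `D_n^ℤ`. -/
def ZDyck (n : ℕ) : Language (Sig n) :=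
  {w | wordEff w = 0}

/-! ### VASS -/

structure VASS (A : Type) where
  Q : Type
  C : Type
  finQ : Finite Q
  finC : Finite C
  E : Set (Q × Option A × (C → ℤ) × Q)
  finE : E.Finite

inductive VASS.NRun {A : Type} (V : VASS A) :
    (V.Q × (V.C → ℕ)) → List A → (V.Q × (V.C → ℕ)) → Prop
  | refl (cfg : V.Q × (V.C → ℕ)) : VASS.NRun V cfg [] cfg
  | step {q : V.Q} {c : V.C → ℕ} {a : Option A} {d : V.C → ℤ} {q' : V.Q}
      {c' : V.C → ℕ} {w : List A} {last : V.Q × (V.C → ℕ)} :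
      (q, a, d, q') ∈ V.E →
      (∀ j, (c' j : ℤ) = (c j : ℤ) + d j) →
      VASS.NRun V (q', c') w last →
      VASS.NRun V (q, c) (a.toList ++ w) last

/-- An initialized VASS: generalized initial/final configurations,
with `none` playing the role of `ω`. -/
structure InitVASS (A : Type) extends VASS A where
  qin : Q
  qout : Q
  cin : C → Option ℕ
  cout : C → Option ℕ

/-- The reachability language of an initialized VASS. -/
def InitVASS.lang {A : Type} (V : InitVASS A) : Language A :=
  {w | ∃ c0 cl : V.C → ℕ,
      V.toVASS.NRun (V.qin, c0) w (V.qout, cl) ∧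
      (∀ j m, V.cin j = some m → c0 j = m) ∧
      (∀ j m, V.cout j = some m → cl j = m)}

/-! ### Transducers -/

structure Transducer (G A : Type) where
  Q : Type
  finQ : Finite Q
  start : Q
  accept : Set Q
  trans : Set (Q × (Option G × Option A) × Q)
  finT : trans.Finite

inductive Transducer.Path {G A : Type} (T : Transducer G A) :
    T.Q → List G → List A → T.Q → Prop
  | refl (q : T.Q) : Transducer.Path T q [] [] q
  | step {q q' qf : T.Q} {g : Option G} {a : Option A} {u : List G} {v : List A} :
      (q, (g, a), q') ∈ T.trans →
      Transducer.Path T q' u v qf →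
      Transducer.Path T q (g.toList ++ u) (a.toList ++ v) qf

/-- The relation recognized by a transducer. -/
def Transducer.rel {G A : Type} (T : Transducer G A) (u : List G) (v : List A) : Prop :=
  ∃ qf ∈ T.accept, T.Path T.start u v qf

/-- `T⁻¹(L)`. -/
def Transducer.invImage {G A : Type} (T : Transducer G A) (L : Language A) : Language G :=
  {u | ∃ v ∈ L, T.rel u v}

/-! ### Regular separability -/

def RegSep {A : Type} (L1 L2 : Language A) : Prop :=
  ∃ R : Language A, R.IsRegular ∧ L1 ≤ R ∧ ∀ w ∈ R, w ∉ L2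

/-! ### Linear sets and regular approximations -/

structure LinSet (n : ℕ) where
  base : Fin n → ℤ
  periods : Set (Fin n → ℤ)
  finP : periods.Finite

def LinSet.toSet {n : ℕ} (L : LinSet n) : Set (Fin n → ℤ) :=
  {x | ∃ p ∈ AddSubmonoid.closure L.periods, x = L.base + p}

def inBox {n : ℕ} (k : ℕ) (x : Fin n → ℤ) : Prop :=
  ∀ j, -(k : ℤ) ≤ x j ∧ x j ≤ (k : ℤ)

/-- Reachability in the ε-NFA underlying the `k`-th regular approximation of `L`:
states are vectors in `[-k,k]^n`, letters move by their effect, ε-transitions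
subtract a period. -/
inductive KReach {n : ℕ} (L : LinSet n) (k : ℕ) :
    (Fin n → ℤ) → List (Sig n) → (Fin n → ℤ) → Prop
  | refl (x : Fin n → ℤ) (h : inBox k x) : KReach L k x [] x
  | letter {x y : Fin n → ℤ} {w : List (Sig n)} (a : Sig n)
      (h : inBox k x) (h' : inBox k (x + letterEff a)) :
      KReach L k (x + letterEff a) w y → KReach L k x (a :: w) y
  | eps {x y : Fin n → ℤ} {w : List (Sig n)} {p : Fin n → ℤ}
      (hp : p ∈ L.periods) (h : inBox k x) (h' : inBox k (x - p)) :
      KReach L k (x - p) w y → KReach L k x w y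

/-- The `k`-th regular approximation `K^k(L)`. -/
def KApprox {n : ℕ} (L : LinSet n) (k : ℕ) : Language (Sig n) :=
  {w | ∃ y, KReach L k 0 w y ∧ y ∈ L.toSet}

/-! ### The `⊕⁺` operation and the families `R_ℓ` -/

def posPlus {n : ℕ} (K L : Set (Fin n → ℤ)) : Set (Fin n → ℤ) :=
  {x | (∀ j, 0 ≤ x j) ∧ ∃ a ∈ K, (∀ j, 0 ≤ a j) ∧ ∃ b ∈ L, x = a + b}

def posFoldAux {n : ℕ} : Set (Fin n → ℤ) → List (Set (Fin n → ℤ)) → Set (Fin n → ℤ)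
  | S, [] => S
  | S, L :: Ls => posFoldAux (posPlus S L) Ls

/-- `posFold [L₁, …, L_ℓ] = L₁ ⊕⁺ ⋯ ⊕⁺ L_ℓ` (associated to the left); for `ℓ = 1`
it is `L₁` itself. -/
def posFold {n : ℕ} : List (Set (Fin n → ℤ)) → Set (Fin n → ℤ)
  | [] => ∅
  | L :: Ls => posFoldAux L Ls

/-- The family `R_ℓ`. -/
def RFam (n ℓ : ℕ) : Set (Language (Sig n)) :=
  {K | ∃ (k : ℕ) (Ls : List (LinSet n)), Ls.length = ℓ ∧
      (0 : Fin n → ℤ) ∉ posFold (Ls.map LinSet.toSet) ∧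
      K = (Ls.map (fun L => KApprox L k)).prod}

/-- `R_{≤ m} = ⋃_{1 ≤ i ≤ m} R_i`. -/
def RleFam (n m : ℕ) : Set (Language (Sig n)) :=
  ⋃ i ∈ Set.Icc 1 m, RFam n i

/-- `R = ⋃_{ℓ ≥ 1} R_ℓ`. -/
def RAll (n : ℕ) : Set (Language (Sig n)) :=
  ⋃ i ∈ Set.Ici 1, RFam n i

/-! ### Basic separator sets -/

def IsBasicSepSet {n : ℕ} (S : Language (Sig n)) (B : Set (Language (Sig n))) : Prop :=
  (∀ K ∈ B, K.IsRegular ∧ ∀ w ∈ K, w ∉ S) ∧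
  (∀ L : Language (Sig n), L.IsRegular → (∀ w ∈ L, w ∉ S) →
    ∃ F ⊆ B, F.Finite ∧ ∀ w ∈ L, ∃ K ∈ F, w ∈ K)

/-! Extra defs for specific statements -/

/-- `u ∼_A v`: the words induce the same state transformation in the DFA `M`. -/
def simEq {α σ : Type} (M : DFA α σ) (u v : List α) : Prop :=
  ∀ p : σ, M.evalFrom p u = M.evalFrom p v

/-- Assemble `w₀ m₁ w₁ ⋯ m_k w_k` over `Σ ⊎ Σ#` (`Sum.inl` = plain, `Sum.inr` = marked). -/
def assemble {α : Type} : List (List α) → List α → List (α ⊕ α)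
  | [], _ => []
  | w :: _, [] => w.map Sum.inl
  | w :: ws, m :: ms => w.map Sum.inl ++ Sum.inr m :: assemble ws ms

/-- The set of effects of a language. -/
def effSet {n : ℕ} (L : Language (Sig n)) : Set (Fin n → ℤ) :=
  {v | ∃ w ∈ L, wordEff w = v}

/-- `Mod(μ, v)`. -/
def ModLang (n μ : ℕ) (v : Fin n → ℤ) : Language (Sig n) :=
  {w | ∀ j, wordEff w j ≡ v j [ZMOD (μ : ℤ)]}

/-- `ModSet(μ, v)`: base `v`, periods `{±μ·e_i}`. -/
def ModSet (n μ : ℕ) (v : Fin n → ℤ) : LinSet n where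
  base := v
  periods := (Set.range fun i : Fin n => (μ : ℤ) • Pi.single i (1 : ℤ)) ∪
    (Set.range fun i : Fin n => -((μ : ℤ) • Pi.single i (1 : ℤ)))
  finP := (Set.finite_range _).union (Set.finite_range _)

/-- `Cov(k, i)`. -/
def CovLang (n k : ℕ) (i : Fin n) : Language (Sig n) :=
  {x | ∃ w w', x = w ++ w' ∧ wordEff w i < 0 ∧
      ∀ u, u <+: w → u ≠ w → 0 ≤ wordEff u i ∧ wordEff u i ≤ (k : ℤ)}

/-- `L_{neg,i}`: base `-e_i`, periods `{±e_j : j ≠ i}`. -/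
def LNeg (n : ℕ) (i : Fin n) : LinSet n where
  base := -Pi.single i 1
  periods := ((fun j : Fin n => Pi.single j (1 : ℤ)) '' {j | j ≠ i}) ∪
    ((fun j : Fin n => -Pi.single j (1 : ℤ)) '' {j | j ≠ i})
  finP := ((Set.toFinite _).image _).union ((Set.toFinite _).image _)

/-- `Z`: base `0`, periods `{±e_j}`. -/
def ZSet (n : ℕ) : LinSet n where
  base := 0
  periods := (Set.range fun j : Fin n => Pi.single j (1 : ℤ)) ∪
    (Set.range fun j : Fin n => -Pi.single j (1 : ℤ))
  finP := (Set.finite_range _).union (Set.finite_range _)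

/-! The language `C_ℓ` over `Σ₂` -/

def ltrA1 : Sig 2 := (0, true)
def ltrA2 : Sig 2 := (1, true)
def ltrB1 : Sig 2 := (0, false)
def ltrB2 : Sig 2 := (1, false)

def fwdWord (j : ℕ) : List (Sig 2) := ltrA1 :: List.replicate j ltrA2
def bwdWord (j : ℕ) : List (Sig 2) := ltrB1 :: List.replicate j ltrB2

def segLang (j : ℕ) : Language (Sig 2) :=
  KStar.kstar ({fwdWord j, bwdWord j} : Language (Sig 2))

def aPlusLang : Language (Sig 2) :=
  {w | ∃ m : ℕ, 0 < m ∧ w = List.replicate m ltrA1}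

def CLang (ℓ : ℕ) : Language (Sig 2) :=
  aPlusLang * ((List.range ℓ).map (fun j => segLang (j + 1))).prod


/-! ### Auxiliary machinery for stmt5 -/

namespace Stmt5Aux

open Classical

variable {n : ℕ} {σ : Type}

lemma wordEff_nil : wordEff ([] : List (Sig n)) = 0 := rfl

lemma wordEff_cons (a : Sig n) (w : List (Sig n)) :
    wordEff (a :: w) = letterEff a + wordEff w := by
  simp [wordEff]

lemma wordEff_append (u v : List (Sig n)) :
    wordEff (u ++ v) = wordEff u + wordEff v := by
  simp [wordEff]

lemma wordEff_singleton (a : Sig n) : wordEff [a] = letterEff a := by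
  simp [wordEff]

lemma abs_letterEff_le (a : Sig n) (j : Fin n) : |letterEff a j| ≤ 1 := by
  unfold letterEff
  by_cases h : j = a.1 <;> simp [h] <;> cases a.2 <;> simp

lemma abs_wordEff_le (w : List (Sig n)) (j : Fin n) : |wordEff w j| ≤ (w.length : ℤ) := by
  induction w with
  | nil => simp [wordEff]
  | cons a w ih =>
    rw [wordEff_cons]
    have h1 := abs_letterEff_le a j
    have h2 : (letterEff a + wordEff w) j = letterEff a j + wordEff w j := rfl
    rw [h2]
    calc |letterEff a j + wordEff w j| ≤ |letterEff a j| + |wordEff w j| := abs_add_le _ _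
      _ ≤ 1 + w.length := add_le_add h1 ih
      _ = ((a :: w).length : ℤ) := by push_cast; simp; ring

/-- A trace of an NFA: a list of (source state, letter) pairs. -/
def IsTrace (M : NFA (Sig n) σ) : σ → List (σ × Sig n) → σ → Prop
  | q, [], q' => q = q'
  | q, e :: t, q' => e.1 = q ∧ ∃ r, r ∈ M.step q e.2 ∧ IsTrace M r t q'

/-- The word read along a trace. -/
def wd (t : List (σ × Sig n)) : List (Sig n) := t.map Prod.snd

/-- The set of source states of a trace. -/
def sts (t : List (σ × Sig n)) : Set σ := {q | q ∈ t.map Prod.fst}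

lemma wd_append (x y : List (σ × Sig n)) : wd (x ++ y) = wd x ++ wd y := by
  simp [wd]

lemma wd_length (x : List (σ × Sig n)) : (wd x).length = x.length := by simp [wd]

variable {M : NFA (Sig n) σ}

lemma IsTrace.append {q s q' : σ} {t₁ t₂ : List (σ × Sig n)}
    (h₁ : IsTrace M q t₁ s) (h₂ : IsTrace M s t₂ q') : IsTrace M q (t₁ ++ t₂) q' := by
  induction t₁ generalizing q with
  | nil =>
    have hq : q = s := h₁
    rw [List.nil_append, hq]; exact h₂
  | cons e t ih =>
    obtain ⟨he, r, hr, ht⟩ := h₁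
    exact ⟨he, r, hr, ih ht⟩

lemma IsTrace.split {q q' : σ} {t₁ t₂ : List (σ × Sig n)}
    (h : IsTrace M q (t₁ ++ t₂) q') : ∃ s, IsTrace M q t₁ s ∧ IsTrace M s t₂ q' := by
  induction t₁ generalizing q with
  | nil => exact ⟨q, rfl, h⟩
  | cons e t ih =>
    obtain ⟨he, r, hr, ht⟩ := h
    obtain ⟨s, h1, h2⟩ := ih ht
    exact ⟨s, ⟨he, r, hr, h1⟩, h2⟩

lemma IsTrace.start_mem {q q' : σ} {t : List (σ × Sig n)} (h : IsTrace M q t q') :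
    q ∈ sts t ∪ {q'} := by
  cases t with
  | nil => right; exact h
  | cons e t =>
    left
    simp only [sts, List.map_cons, Set.mem_setOf_eq, List.mem_cons]
    exact Or.inl h.1.symm

lemma IsTrace.snoc {q cur r : σ} {st : List (σ × Sig n)} {a : Sig n}
    (h : IsTrace M q st cur) (hr : r ∈ M.step cur a) :
    IsTrace M q (st ++ [(cur, a)]) r :=
  h.append ⟨rfl, r, hr, rfl⟩

lemma mem_evalFrom_iff {S : Set σ} {w : List (Sig n)} {q' : σ} :
    q' ∈ M.evalFrom S w ↔ ∃ q ∈ S, ∃ t, IsTrace M q t q' ∧ wd t = w := by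
  induction w generalizing S with
  | nil =>
    simp only [NFA.evalFrom_nil]
    constructor
    · intro h; exact ⟨q', h, [], rfl, rfl⟩
    · rintro ⟨q, hq, t, ht, hw⟩
      have ht0 : t = [] := by
        cases t with
        | nil => rfl
        | cons e t => simp [wd] at hw
      subst ht0
      have : q = q' := ht
      rwa [← this]
  | cons a w ih =>
    have hev : M.evalFrom S (a :: w) = M.evalFrom (M.stepSet S a) w := rfl
    rw [hev, ih]
    constructor
    · rintro ⟨q1, hq1, t, ht, hw⟩
      rw [NFA.mem_stepSet] at hq1
      obtain ⟨q, hq, hstep⟩ := hq1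
      refine ⟨q, hq, (q, a) :: t, ⟨rfl, q1, hstep, ht⟩, ?_⟩
      simp only [wd] at hw ⊢
      simp [hw]
    · rintro ⟨q, hq, t, ht, hw⟩
      cases t with
      | nil => simp [wd] at hw
      | cons e t =>
        obtain ⟨he, r, hr, ht'⟩ := ht
        simp only [wd, List.map_cons, List.cons.injEq] at hw
        obtain ⟨ha, hw'⟩ := hw
        refine ⟨r, ?_, t, ht', hw'⟩
        rw [NFA.mem_stepSet]
        exact ⟨q, hq, by rw [← ha]; exact hr⟩

lemma mem_accepts_iff {w : List (Sig n)} :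
    w ∈ M.accepts ↔ ∃ q0 ∈ M.start, ∃ qf ∈ M.accept, ∃ t, IsTrace M q0 t qf ∧ wd t = w := by
  rw [NFA.mem_accepts]
  constructor
  · rintro ⟨qf, hqf, h⟩
    rw [mem_evalFrom_iff] at h
    obtain ⟨q0, h0, t, ht, hw⟩ := h
    exact ⟨q0, h0, qf, hqf, t, ht, hw⟩
  · rintro ⟨q0, h0, qf, hqf, t, ht, hw⟩
    exact ⟨qf, hqf, mem_evalFrom_iff.mpr ⟨q0, h0, t, ht, hw⟩⟩

lemma insert_cycle {q0 qf q : σ} {t c : List (σ × Sig n)}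
    (ht : IsTrace M q0 t qf) (hq : q ∈ sts t ∪ {qf}) (hc : IsTrace M q c q) :
    ∃ t', IsTrace M q0 t' qf ∧ sts t' = sts t ∪ sts c ∧
      wordEff (wd t') = wordEff (wd t) + wordEff (wd c) ∧
      t'.length = t.length + c.length := by
  rcases hq with hq | hq
  · simp only [sts, Set.mem_setOf_eq, List.mem_map] at hq
    obtain ⟨e, he, hfst⟩ := hq
    obtain ⟨x, y, rfl⟩ := List.append_of_mem he
    obtain ⟨s, hx, hey⟩ := ht.split
    have hsq : s = q := by rw [← hey.1, hfst]
    subst hsq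
    refine ⟨x ++ c ++ (e :: y), ?_, ?_, ?_, ?_⟩
    · rw [List.append_assoc]
      exact hx.append (hc.append hey)
    · ext z
      simp only [sts, Set.mem_setOf_eq, List.map_append, List.mem_append, List.map_cons,
        List.mem_cons, Set.mem_union]
      tauto
    · simp only [wd_append, wordEff_append]
      abel
    · simp only [List.length_append, List.length_cons]
      ring
  · have hq' : q = qf := hq
    subst hq'
    refine ⟨t ++ c, ht.append hc, ?_, ?_, ?_⟩
    · ext z
      simp only [sts, Set.mem_setOf_eq, List.map_append, List.mem_append, Set.mem_union]
    · rw [wd_append, wordEff_append]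
    · simp

variable [Fintype σ]

/-- Effects of short cycles anchored at states in `S`. -/
def PSet (M : NFA (Sig n) σ) (S : Set σ) : Set (Fin n → ℤ) :=
  {v | ∃ q ∈ S, ∃ c : List (σ × Sig n),
    IsTrace M q c q ∧ c.length ≤ Fintype.card σ ∧ wordEff (wd c) = v}

lemma PSet_finite (M : NFA (Sig n) σ) (S : Set σ) : (PSet M S).Finite := by
  apply Set.Finite.subset
    (Set.finite_Icc (fun _ : Fin n => -(Fintype.card σ : ℤ)) fun _ => (Fintype.card σ : ℤ))
  rintro v ⟨q, hq, c, hc, hlen, rfl⟩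
  have hb : ∀ j, |wordEff (wd c) j| ≤ (Fintype.card σ : ℤ) := by
    intro j
    have h1 := abs_wordEff_le (wd c) j
    rw [wd_length] at h1
    have h2 : (c.length : ℤ) ≤ (Fintype.card σ : ℤ) := by exact_mod_cast hlen
    linarith
  rw [Set.mem_Icc]
  constructor
  · intro j
    show -(Fintype.card σ : ℤ) ≤ wordEff (wd c) j
    linarith [(abs_le.mp (hb j)).1]
  · intro j
    show wordEff (wd c) j ≤ (Fintype.card σ : ℤ)
    linarith [(abs_le.mp (hb j)).2]

/-- The linear set associated to a base vector and a set of states. -/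
def mkL (M : NFA (Sig n) σ) (p : (Fin n → ℤ) × Set σ) : LinSet n :=
  ⟨p.1, PSet M p.2, PSet_finite M p.2⟩

/-- Valid (base, anchor-set) pairs. -/
def VSet (M : NFA (Sig n) σ) : Set ((Fin n → ℤ) × Set σ) :=
  {p | (∃ u q0 qf, q0 ∈ M.start ∧ qf ∈ M.accept ∧ IsTrace M q0 u qf ∧
        p.2 ⊆ sts u ∪ {qf} ∧ p.1 = wordEff (wd u)) ∧
      ∀ j, |p.1 j| ≤ (((Fintype.card σ + 1) ^ 2 : ℕ) : ℤ)}

lemma VSet_finite (M : NFA (Sig n) σ) : (VSet M).Finite := by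
  have h1 : (Set.Icc (fun _ : Fin n => -((((Fintype.card σ + 1) ^ 2 : ℕ)) : ℤ))
      fun _ => (((Fintype.card σ + 1) ^ 2 : ℕ) : ℤ)).Finite := Set.finite_Icc _ _
  have h2 : (Set.univ : Set (Set σ)).Finite := Set.finite_univ
  apply (h1.prod h2).subset
  rintro ⟨b, S⟩ ⟨_, hb⟩
  refine ⟨?_, Set.mem_univ _⟩
  rw [Set.mem_Icc]
  constructor
  · intro j
    show -((((Fintype.card σ + 1) ^ 2 : ℕ)) : ℤ) ≤ b j
    linarith [(abs_le.mp (hb j)).1]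
  · intro j
    show b j ≤ ((((Fintype.card σ + 1) ^ 2 : ℕ)) : ℤ)
    linarith [(abs_le.mp (hb j)).2]

lemma KReach_eff {L : LinSet n} {k : ℕ} {x y : Fin n → ℤ} {w : List (Sig n)}
    (h : KReach L k x w y) : ∃ p ∈ AddSubmonoid.closure L.periods, x + wordEff w = y + p := by
  induction h with
  | refl z hz => exact ⟨0, zero_mem _, by rw [wordEff_nil]⟩
  | @letter x1 y1 w1 a h h' hr ih =>
    obtain ⟨p, hp, he⟩ := ih
    refine ⟨p, hp, ?_⟩
    calc x1 + wordEff (a :: w1) = x1 + letterEff a + wordEff w1 := by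
          rw [wordEff_cons]; abel
      _ = y1 + p := he
  | @eps x1 y1 w1 p0 hp h h' hr ih =>
    obtain ⟨p, hpc, he⟩ := ih
    refine ⟨p + p0, add_mem hpc (AddSubmonoid.subset_closure hp), ?_⟩
    calc x1 + wordEff w1 = (x1 - p0 + wordEff w1) + p0 := by abel
      _ = y1 + p + p0 := by rw [he]
      _ = y1 + (p + p0) := by abel

lemma effSet_KApprox_sub {L : LinSet n} {k : ℕ} : effSet (KApprox L k) ⊆ L.toSet := by
  rintro v ⟨w, hw, rfl⟩
  obtain ⟨y, hr, pp, hpc, hy⟩ := hw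
  obtain ⟨p2, hp2, he⟩ := KReach_eff hr
  refine ⟨pp + p2, add_mem hpc hp2, ?_⟩
  rw [← add_assoc, ← hy, ← he]
  abel

lemma realize_list {S : Set σ} (l : List (Fin n → ℤ)) (hl : ∀ v ∈ l, v ∈ PSet M S) :
    ∀ (t : List (σ × Sig n)) (q0 qf : σ), IsTrace M q0 t qf → S ⊆ sts t ∪ {qf} →
    ∃ t', IsTrace M q0 t' qf ∧ S ⊆ sts t' ∪ {qf} ∧
      wordEff (wd t') = wordEff (wd t) + l.sum := by
  induction l with
  | nil =>
    intro t q0 qf ht hS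
    exact ⟨t, ht, hS, by simp⟩
  | cons v l ih =>
    intro t q0 qf ht hS
    obtain ⟨q, hq, c, hc, hlen, hv⟩ := hl v List.mem_cons_self
    obtain ⟨t₁, ht₁, hsts, heff, _⟩ := insert_cycle ht (hS hq) hc
    have hS₁ : S ⊆ sts t₁ ∪ {qf} := by
      intro z hz
      rcases hS hz with h | h
      · left; rw [hsts]; left; exact h
      · right; exact h
    obtain ⟨t', h1, h2, h3⟩ := ih (fun v hv => hl v (List.mem_cons_of_mem _ hv)) t₁ q0 qf ht₁ hS₁
    refine ⟨t', h1, h2, ?_⟩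
    rw [h3, heff, hv, List.sum_cons]
    abel

lemma toSet_sub_effSet {p : (Fin n → ℤ) × Set σ} (hp : p ∈ VSet M) :
    (mkL M p).toSet ⊆ effSet M.accepts := by
  obtain ⟨⟨u, q0, qf, h0, hf, hu, hS, hb⟩, _⟩ := hp
  rintro x ⟨pp, hpp, rfl⟩
  obtain ⟨l, hl, hsum⟩ := AddSubmonoid.exists_list_of_mem_closure hpp
  obtain ⟨t', h1, _, h3⟩ := realize_list l hl u q0 qf hu hS
  refine ⟨wd t', mem_accepts_iff.mpr ⟨q0, h0, qf, hf, t', h1, rfl⟩, ?_⟩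
  rw [h3, hsum]
  show wordEff (wd u) + pp = (mkL M p).base + pp
  rw [show (mkL M p).base = p.1 from rfl, hb]

lemma inBox_of {k : ℕ} {x : Fin n → ℤ} (h : ∀ j, |x j| ≤ (k : ℤ)) : inBox k x :=
  fun j => abs_le.mp (h j)

lemma bound_shift {d : Fin n → ℤ} {m : ℕ} (w : List (Sig n))
    (hd : ∀ j, |d j| ≤ (m : ℤ)) (j : Fin n) :
    |(d + wordEff w) j| ≤ (m : ℤ) + w.length := by
  calc |(d + wordEff w) j| = |d j + wordEff w j| := rfl
    _ ≤ |d j| + |wordEff w j| := abs_add_le _ _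
    _ ≤ (m : ℤ) + w.length := add_le_add (hd j) (abs_wordEff_le w j)

lemma inBox_shift {k m : ℕ} {d : Fin n → ℤ} (w : List (Sig n))
    (hd : ∀ j, |d j| ≤ (m : ℤ)) (h : m + w.length ≤ k) : inBox k (d + wordEff w) := by
  apply inBox_of
  intro j
  calc |(d + wordEff w) j| ≤ (m : ℤ) + w.length := bound_shift w hd j
    _ ≤ (k : ℤ) := by exact_mod_cast h


set_option maxHeartbeats 2000000 in
/-- The main cycle-popping lemma. -/
lemma main_lemma (M : NFA (Sig n) σ) (q0 qf : σ) (S0 : Set σ) (hqfS : qf ∈ S0) :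
    ∀ (t : List (σ × Sig n)) (cur : σ) (st : List (σ × Sig n)),
      IsTrace M cur t qf → IsTrace M q0 st cur →
      (st.map Prod.fst ++ [cur]).Nodup →
      sts st ⊆ S0 → cur ∈ S0 → sts t ⊆ S0 →
      ∃ (u : List (σ × Sig n)) (g : ℕ),
        IsTrace M q0 u qf ∧
        sts u ∪ {qf} = sts st ∪ sts t ∪ {qf} ∧
        g + 1 ≤ (sts u ∪ {qf} : Set σ).ncard ∧
        u.length + 1 ≤ Fintype.card σ + g * Fintype.card σ ∧
        ∀ (L : LinSet n) (k : ℕ) (d : Fin n → ℤ) (m : ℕ),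
          PSet M S0 ⊆ L.periods → (∀ j, |d j| ≤ (m : ℤ)) →
          m + g * Fintype.card σ + Fintype.card σ ≤ k →
          KReach L k (d + wordEff (wd st)) (wd t) (d + wordEff (wd u)) := by
  intro t
  induction t with
  | nil =>
    intro cur st ht hst hnd hstS hcurS htS
    have hcq : cur = qf := ht
    subst hcq
    have hstlen : st.length + 1 ≤ Fintype.card σ := by
      have := hnd.length_le_card
      simpa using this
    refine ⟨st, 0, hst, by simp [sts], ?_, by simpa using hstlen, ?_⟩
    · have : 0 < (sts st ∪ {cur} : Set σ).ncard :=
        (Set.ncard_pos (Set.toFinite _)).mpr ⟨cur, Or.inr rfl⟩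
      omega
    · intro L k d m hPL hd hk
      show KReach L k (d + wordEff (wd st)) [] (d + wordEff (wd st))
      apply KReach.refl
      apply inBox_shift (wd st) hd
      rw [wd_length]
      omega
  | cons e t₂ ih =>
    intro cur st ht hst hnd hstS hcurS htS
    obtain ⟨hep, r, hr, ht₂⟩ := ht
    set st₂ := st ++ [(cur, e.2)] with hst₂def
    have hst₂ : IsTrace M q0 st₂ r := hst.snoc hr
    have hmap₂ : st₂.map Prod.fst = st.map Prod.fst ++ [cur] := by simp [hst₂def]
    have hnd₂ : (st₂.map Prod.fst).Nodup := by rw [hmap₂]; exact hnd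
    have hst₂len : st₂.length ≤ Fintype.card σ := by
      have h1 := hnd₂.length_le_card
      rwa [List.length_map] at h1
    have hstlen : st.length + 1 = st₂.length := by simp [hst₂def]
    have hstsst₂ : sts st₂ ⊆ S0 := by
      intro z hz
      simp only [sts, Set.mem_setOf_eq, hmap₂, List.mem_append, List.mem_singleton] at hz
      rcases hz with h | h
      · exact hstS h
      · rw [h]; exact hcurS
    have hstst₂S : sts t₂ ⊆ S0 := by
      intro z hz
      apply htS
      simp only [sts, Set.mem_setOf_eq, List.map_cons, List.mem_cons] at hz ⊢
      exact Or.inr hz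
    have hrS0 : r ∈ S0 := by
      rcases ht₂.start_mem with h | h
      · exact hstst₂S h
      · rw [Set.mem_singleton_iff] at h; rw [h]; exact hqfS
    have heff₂ : wordEff (wd st₂) = wordEff (wd st) + letterEff e.2 := by
      rw [hst₂def, wd_append, wordEff_append]
      simp [wd, wordEff_singleton]
    have hstsunion : sts st ∪ sts (e :: t₂) = sts st₂ ∪ sts t₂ := by
      ext z
      simp only [sts, Set.mem_setOf_eq, hmap₂, Set.mem_union, List.mem_append,
        List.mem_singleton, List.map_cons, List.mem_cons, hep]
      tauto
    by_cases hrep : r ∈ st₂.map Prod.fst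
    · -- repeat of a state: pop a cycle
      obtain ⟨e', he'mem, he'fst⟩ := List.mem_map.mp hrep
      obtain ⟨stA, stB, hsplit⟩ := List.append_of_mem he'mem
      set c := e' :: stB with hcdef
      have hsplit' : st₂ = stA ++ c := hsplit
      have hAc : IsTrace M q0 (stA ++ c) r := by rw [← hsplit']; exact hst₂
      obtain ⟨s, hA, hC⟩ := hAc.split
      have hsr : s = r := hC.1.symm.trans he'fst
      rw [hsr] at hA hC
      have hndA : (stA.map Prod.fst ++ [r]).Nodup := by
        have hsubl : List.Sublist (stA.map Prod.fst ++ [r]) (st₂.map Prod.fst) := by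
          rw [hsplit', hcdef]
          simp only [List.map_append, List.map_cons]
          apply List.Sublist.append_left
          rw [he'fst]
          exact List.cons_sublist_cons.mpr (List.nil_sublist _)
        exact hnd₂.sublist hsubl
      have hclen : c.length ≤ Fintype.card σ := by
        have h1 : c.length ≤ st₂.length := by
          rw [hsplit', List.length_append]; omega
        omega
      have hstAlen : stA.length ≤ Fintype.card σ := by
        have h1 : stA.length ≤ st₂.length := by
          rw [hsplit', List.length_append]; omega
        omega
      have hstsA : sts stA ⊆ S0 := by
        intro z hz
        apply hstsst₂
        simp only [sts, Set.mem_setOf_eq, hsplit', List.map_append, List.mem_append] at hz ⊢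
        exact Or.inl hz
      have hcycP : wordEff (wd c) ∈ PSet M S0 := ⟨r, hrS0, c, hC, hclen, rfl⟩
      have heffAC : wordEff (wd st₂) = wordEff (wd stA) + wordEff (wd c) := by
        rw [hsplit', wd_append, wordEff_append]
      have hstsAC : sts st₂ = sts stA ∪ sts c := by
        ext z
        simp only [sts, Set.mem_setOf_eq, hsplit', List.map_append, List.mem_append,
          Set.mem_union]
      obtain ⟨u', g', htu', hstates', hncard', hlen', hrun'⟩ :=
        ih r stA ht₂ hA hndA hstsA hrS0 hstst₂S
      by_cases hsub : sts c ⊆ sts u' ∪ {qf}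
      · -- the popped cycle is subtracted via an ε-transition
        refine ⟨u', g', htu', ?_, hncard', hlen', ?_⟩
        · rw [hstsunion, hstsAC]
          rw [hstates'] at hsub ⊢
          ext z
          have hz := @hsub z
          simp only [Set.mem_union, Set.mem_singleton_iff] at hz ⊢
          tauto
        · intro L k d m hPL hd hk
          have hmCk : m + Fintype.card σ ≤ k :=
            le_trans (Nat.add_le_add_right (Nat.le_add_right m _) _) hk
          have run' := hrun' L k d m hPL hd hk
          show KReach L k (d + wordEff (wd st)) (wd (e :: t₂)) (d + wordEff (wd u'))
          have hwd : wd (e :: t₂) = e.2 :: wd t₂ := rfl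
          rw [hwd]
          have hfixa : d + wordEff (wd st) + letterEff e.2 = d + wordEff (wd st₂) := by
            rw [heff₂]; abel
          have hfixb : d + wordEff (wd st) + letterEff e.2 - wordEff (wd c)
              = d + wordEff (wd stA) := by
            rw [hfixa, heffAC]; abel
          have hbox1 : inBox k (d + wordEff (wd st)) := by
            apply inBox_shift (wd st) hd
            rw [wd_length]
            omega
          have hbox2 : inBox k (d + wordEff (wd st) + letterEff e.2) := by
            rw [hfixa]
            apply inBox_shift (wd st₂) hd
            rw [wd_length]
            omega
          apply KReach.letter e.2 hbox1 hbox2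
          apply KReach.eps (hPL hcycP) hbox2
          · rw [hfixb]
            apply inBox_shift (wd stA) hd
            rw [wd_length]
            omega
          · rw [hfixb]
            exact run'
      · -- the popped cycle is kept: insert it into the base run
        have hrmem : r ∈ sts u' ∪ {qf} := by
          rcases ht₂.start_mem with h | h
          · rw [hstates']; left; right; exact h
          · right; exact h
        obtain ⟨u, htu, hstsu, heffu, hlenu⟩ := insert_cycle htu' hrmem hC
        obtain ⟨z0, hz0c, hz0n⟩ := Set.not_subset.mp hsub
        have hexp : (g' + 1) * Fintype.card σ = g' * Fintype.card σ + Fintype.card σ := by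
          ring
        refine ⟨u, g' + 1, htu, ?_, ?_, ?_, ?_⟩
        · rw [hstsunion, hstsAC, hstsu]
          ext z
          have hz := Set.ext_iff.mp hstates' z
          simp only [Set.mem_union, Set.mem_singleton_iff] at hz ⊢
          tauto
        · have hle : (sts u' ∪ {qf} : Set σ) ⊆ sts u ∪ {qf} := by
            intro z hz
            rcases hz with h | h
            · left; rw [hstsu]; left; exact h
            · right; exact h
          have hmem0 : z0 ∈ sts u ∪ {qf} := Or.inl (by rw [hstsu]; exact Or.inr hz0c)
          have hss : (sts u' ∪ {qf} : Set σ) ⊂ sts u ∪ {qf} :=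
            lt_of_le_of_ne hle fun heq => hz0n (by rw [heq]; exact hmem0)
          have hlt := Set.ncard_lt_ncard hss (Set.toFinite _)
          omega
        · rw [hexp]
          have h1 : u.length = u'.length + c.length := hlenu
          linarith [hlen', hclen]
        · intro L k d m hPL hd hk
          rw [hexp] at hk
          have hmCk : m + Fintype.card σ ≤ k := by linarith [Nat.le_add_right m (g' * Fintype.card σ)]
          have hd₂ : ∀ j, |(d + wordEff (wd c)) j| ≤ ((m + Fintype.card σ : ℕ) : ℤ) := by
            intro j
            have h1 := bound_shift (wd c) hd j
            rw [wd_length] at h1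
            have h2 : (c.length : ℤ) ≤ (Fintype.card σ : ℤ) := by exact_mod_cast hclen
            push_cast
            push_cast at h1
            linarith
          have hk₂ : (m + Fintype.card σ) + g' * Fintype.card σ + Fintype.card σ ≤ k := by
            linarith
          have run' := hrun' L k (d + wordEff (wd c)) (m + Fintype.card σ) hPL hd₂ hk₂
          show KReach L k (d + wordEff (wd st)) (wd (e :: t₂)) (d + wordEff (wd u))
          have hwd : wd (e :: t₂) = e.2 :: wd t₂ := rfl
          rw [hwd]
          have hfixa : d + wordEff (wd st) + letterEff e.2 = d + wordEff (wd st₂) := by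
            rw [heff₂]; abel
          have hbox1 : inBox k (d + wordEff (wd st)) := by
            apply inBox_shift (wd st) hd
            rw [wd_length]
            omega
          have hbox2 : inBox k (d + wordEff (wd st) + letterEff e.2) := by
            rw [hfixa]
            apply inBox_shift (wd st₂) hd
            rw [wd_length]
            omega
          apply KReach.letter e.2 hbox1 hbox2
          have hstart : d + wordEff (wd st) + letterEff e.2
              = (d + wordEff (wd c)) + wordEff (wd stA) := by
            rw [hfixa, heffAC]; abel
          have hend : (d + wordEff (wd c)) + wordEff (wd u') = d + wordEff (wd u) := by
            rw [heffu]; abel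
          rw [hstart, ← hend]
          exact run'
    · -- no repeat: just push the letter
      have hnd₃ : (st₂.map Prod.fst ++ [r]).Nodup := by
        rw [List.nodup_append]
        refine ⟨hnd₂, List.nodup_singleton r, ?_⟩
        intro z hz b hz' hzb
        rw [List.mem_singleton] at hz'
        rw [hzb, hz'] at hz
        exact hrep hz
      obtain ⟨u, g, htu, hstates, hncard, hlen, hrun⟩ :=
        ih r st₂ ht₂ hst₂ hnd₃ hstsst₂ hrS0 hstst₂S
      refine ⟨u, g, htu, ?_, hncard, hlen, ?_⟩
      · rw [hstsunion]
        exact hstates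
      · intro L k d m hPL hd hk
        have hmCk : m + Fintype.card σ ≤ k :=
          le_trans (Nat.add_le_add_right (Nat.le_add_right m _) _) hk
        have run' := hrun L k d m hPL hd hk
        show KReach L k (d + wordEff (wd st)) (wd (e :: t₂)) (d + wordEff (wd u))
        have hwd : wd (e :: t₂) = e.2 :: wd t₂ := rfl
        rw [hwd]
        have hfixa : d + wordEff (wd st) + letterEff e.2 = d + wordEff (wd st₂) := by
          rw [heff₂]; abel
        have hbox1 : inBox k (d + wordEff (wd st)) := by
          apply inBox_shift (wd st) hd
          rw [wd_length]
          omega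
        have hbox2 : inBox k (d + wordEff (wd st) + letterEff e.2) := by
          rw [hfixa]
          apply inBox_shift (wd st₂) hd
          rw [wd_length]
          omega
        apply KReach.letter e.2 hbox1 hbox2
        rw [hfixa]
        exact run'

end Stmt5Aux

set_option maxHeartbeats 1000000 in
theorem stmt5 {n : ℕ} {σ : Type} [Fintype σ] (M : NFA (Sig n) σ) :
    ∃ Ls : List (LinSet n),
      (∀ w ∈ M.accepts, ∃ L ∈ Ls, w ∈ KApprox L ((Fintype.card σ + 1) ^ 2)) ∧
      effSet M.accepts = ⋃ L ∈ Ls, effSet (KApprox L ((Fintype.card σ + 1) ^ 2)) ∧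
      effSet M.accepts = ⋃ L ∈ Ls, L.toSet := by
  classical
  have hfin : ((Stmt5Aux.mkL M) '' (Stmt5Aux.VSet M)).Finite := (Stmt5Aux.VSet_finite M).image _
  set k := (Fintype.card σ + 1) ^ 2 with hkdef
  set Ls := hfin.toFinset.toList with hLsdef
  have hmemL : ∀ L, L ∈ Ls ↔ L ∈ Stmt5Aux.mkL M '' Stmt5Aux.VSet M := fun L => by
    rw [hLsdef, Finset.mem_toList, Set.Finite.mem_toFinset]
  have hcov : ∀ w ∈ M.accepts, ∃ L ∈ Ls, w ∈ KApprox L k := by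
    intro w hw
    obtain ⟨q0, h0, qf, hf, t, ht, rfl⟩ := Stmt5Aux.mem_accepts_iff.mp hw
    set S0 := Stmt5Aux.sts t ∪ {qf} with hS0
    have hqfS : qf ∈ S0 := Or.inr rfl
    obtain ⟨u, g, htu, hstates, hncard, hlen, hrun⟩ :=
      Stmt5Aux.main_lemma M q0 qf S0 hqfS t q0 [] ht rfl (by simp)
        (by rintro z hz; simp [Stmt5Aux.sts] at hz) ht.start_mem Set.subset_union_left
    have hcard : (Stmt5Aux.sts u ∪ {qf} : Set σ).ncard ≤ Fintype.card σ := by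
      have h1 := Set.ncard_le_ncard (Set.subset_univ (Stmt5Aux.sts u ∪ {qf})) Set.finite_univ
      rwa [Set.ncard_univ, Nat.card_eq_fintype_card] at h1
    have hgC : g + 1 ≤ Fintype.card σ := le_trans hncard hcard
    have hkbig : g * Fintype.card σ + Fintype.card σ ≤ k := by
      have h1 : (g + 1) * Fintype.card σ ≤ Fintype.card σ * Fintype.card σ :=
        Nat.mul_le_mul_right _ hgC
      have h2 : (g + 1) * Fintype.card σ = g * Fintype.card σ + Fintype.card σ := by ring
      have h3 : Fintype.card σ * Fintype.card σ ≤ (Fintype.card σ + 1) ^ 2 := by nlinarith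
      rw [hkdef]
      linarith
    have hulen : u.length ≤ k := by linarith [hlen]
    have hbox : ∀ j, |wordEff (Stmt5Aux.wd u) j| ≤ ((k : ℕ) : ℤ) := by
      intro j
      have h1 := Stmt5Aux.abs_wordEff_le (Stmt5Aux.wd u) j
      rw [Stmt5Aux.wd_length] at h1
      exact le_trans h1 (by exact_mod_cast hulen)
    have hS0sub : S0 ⊆ Stmt5Aux.sts u ∪ {qf} := by
      rw [hstates]
      intro z hz
      rcases hz with h | h
      · left; right; exact h
      · right; exact h
    have hLmem : Stmt5Aux.mkL M (wordEff (Stmt5Aux.wd u), S0)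
        ∈ Stmt5Aux.mkL M '' Stmt5Aux.VSet M :=
      ⟨(wordEff (Stmt5Aux.wd u), S0), ⟨⟨u, q0, qf, h0, hf, htu, hS0sub, rfl⟩, hbox⟩, rfl⟩
    refine ⟨Stmt5Aux.mkL M (wordEff (Stmt5Aux.wd u), S0), (hmemL _).mpr hLmem, ?_⟩
    have hrun0 := hrun (Stmt5Aux.mkL M (wordEff (Stmt5Aux.wd u), S0)) k 0 0
      (fun v hv => hv) (by intro j; simp) (by simpa using hkbig)
    have h00 : (0 : Fin n → ℤ) + wordEff (Stmt5Aux.wd ([] : List (σ × Sig n))) = 0 := by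
      simp [Stmt5Aux.wd, wordEff]
    rw [h00, zero_add] at hrun0
    exact ⟨wordEff (Stmt5Aux.wd u), hrun0, 0, zero_mem _, (add_zero _).symm⟩
  have hsub1 : ∀ L ∈ Ls, L.toSet ⊆ effSet M.accepts := by
    intro L hL
    obtain ⟨p, hp, rfl⟩ := (hmemL L).mp hL
    exact Stmt5Aux.toSet_sub_effSet hp
  refine ⟨Ls, hcov, ?_, ?_⟩
  · apply Set.Subset.antisymm
    · rintro v ⟨w, hw, rfl⟩
      obtain ⟨L, hL, hK⟩ := hcov w hw
      exact Set.mem_iUnion₂.mpr ⟨L, hL, ⟨w, hK, rfl⟩⟩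
    · intro v hv
      obtain ⟨L, hL, hvL⟩ := Set.mem_iUnion₂.mp hv
      exact hsub1 L hL (Stmt5Aux.effSet_KApprox_sub hvL)
  · apply Set.Subset.antisymm
    · rintro v ⟨w, hw, rfl⟩
      obtain ⟨L, hL, hK⟩ := hcov w hw
      exact Set.mem_iUnion₂.mpr ⟨L, hL, Stmt5Aux.effSet_KApprox_sub ⟨w, hK, rfl⟩⟩
    · intro v hv
      obtain ⟨L, hL, hvL⟩ := Set.mem_iUnion₂.mp hv
      exact hsub1 L hL hvL
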